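/- Let β ∈ L^∞[0,∞) have a bounded zero-mean primitive β⁽⁻¹⁾, let K be C¹ with support in [0,k] and K(0)=K(k)=0, and let s : ℝ → ℝ be bounded with bounded a.e. derivative (e.g. Lipschitz). Then I_N(t) := ∫_ℝ β(Nσ) s(σ) K(t−σ) dσ = O(1/N): there is C with |I_N(t)| ≤ C/N for all N ≥ 1 and all t ≥ 0. -/

import Mathlib

open MeasureTheory Filter

section Helpers

open Set

lemma bdd_meas_intervalIntegrable {f : ℝ → ℝ} (hm : Measurable f) {M : ℝ}
    (hb : ∀ x, |f x| ≤ M) (x y : ℝ) : IntervalIntegrable f volume x y := by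
  refine (intervalIntegrable_iff (μ := volume)).2 ?_
  refine Integrable.mono' (g := fun _ => M) ?_ (hm.aestronglyMeasurable.restrict) ?_
  · exact integrableOn_const measure_Ioc_lt_top.ne
  · exact Eventually.of_forall fun z => by simpa [Real.norm_eq_abs] using hb z

lemma tri {a b : ℝ} (hab : a ≤ b) {f g : ℝ → ℝ}
    (hf : IntegrableOn f (Set.Ioc a b))
    (hg : IntegrableOn g (Set.Ioc a b)) :
    ∫ σ in a..b, f σ * (∫ v in a..σ, g v) = ∫ v in a..b, (∫ σ in v..b, f σ) * g v := by
  have hS : MeasurableSet {p : ℝ × ℝ | p.2 ≤ p.1} :=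
    measurableSet_le measurable_snd measurable_fst
  set μ := volume.restrict (Set.Ioc a b) with hμ
  have hΦ : Integrable (fun p : ℝ × ℝ => ({p : ℝ × ℝ | p.2 ≤ p.1}).indicator
      (fun p => f p.1 * g p.2) p) (μ.prod μ) :=
    (Integrable.mul_prod hf hg).indicator hS
  have key : ∫ σ, (∫ v, ({p : ℝ × ℝ | p.2 ≤ p.1}).indicator (fun p => f p.1 * g p.2) (σ, v) ∂μ) ∂μ
      = ∫ v, (∫ σ, ({p : ℝ × ℝ | p.2 ≤ p.1}).indicator (fun p => f p.1 * g p.2) (σ, v) ∂μ) ∂μ :=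
    integral_integral_swap hΦ
  have hL : ∫ σ in a..b, f σ * (∫ v in a..σ, g v)
      = ∫ σ, (∫ v, ({p : ℝ × ℝ | p.2 ≤ p.1}).indicator (fun p => f p.1 * g p.2) (σ, v) ∂μ) ∂μ := by
    rw [intervalIntegral.integral_of_le hab]
    refine setIntegral_congr_fun measurableSet_Ioc fun σ hσ => ?_
    have : (fun v => ({p : ℝ × ℝ | p.2 ≤ p.1}).indicator (fun p => f p.1 * g p.2) (σ, v))
        = fun v => (Set.Iic σ).indicator (fun v => f σ * g v) v := by
      funext v
      by_cases h : v ≤ σ <;> simp [Set.indicator, h]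
    rw [this, hμ, setIntegral_indicator measurableSet_Iic]
    have h2 : Set.Ioc a b ∩ Set.Iic σ = Set.Ioc a σ := by
      ext x; simp only [Set.mem_inter_iff, Set.mem_Ioc, Set.mem_Iic]
      exact ⟨fun ⟨⟨h1, _⟩, h3⟩ => ⟨h1, h3⟩, fun ⟨h1, h3⟩ => ⟨⟨h1, h3.trans hσ.2⟩, h3⟩⟩
    rw [h2, intervalIntegral.integral_of_le hσ.1.le, ← integral_const_mul]
  have hR : ∫ v in a..b, (∫ σ in v..b, f σ) * g v
      = ∫ v, (∫ σ, ({p : ℝ × ℝ | p.2 ≤ p.1}).indicator (fun p => f p.1 * g p.2) (σ, v) ∂μ) ∂μ := by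
    rw [intervalIntegral.integral_of_le hab]
    refine setIntegral_congr_fun measurableSet_Ioc fun v hv => ?_
    have : (fun σ => ({p : ℝ × ℝ | p.2 ≤ p.1}).indicator (fun p => f p.1 * g p.2) (σ, v))
        = fun σ => (Set.Ici v).indicator (fun σ => f σ * g v) σ := by
      funext σ
      by_cases h : v ≤ σ <;> simp [Set.indicator, h]
    rw [this, hμ, setIntegral_indicator measurableSet_Ici]
    have h2 : Set.Ioc a b ∩ Set.Ici v = Set.Icc v b := by
      ext x; simp only [Set.mem_inter_iff, Set.mem_Ioc, Set.mem_Icc, Set.mem_Ici]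
      exact ⟨fun ⟨⟨_, h3⟩, h4⟩ => ⟨h4, h3⟩, fun ⟨h1, h3⟩ => ⟨⟨lt_of_lt_of_le hv.1 h1, h3⟩, h1⟩⟩
    rw [h2, integral_Icc_eq_integral_Ioc, intervalIntegral.integral_of_le hv.2, ← integral_mul_const]
  rw [hL, hR, key]

lemma exists_good_g (s s' : ℝ → ℝ) (Ms : ℝ) (hMs : ∀ x, |s' x| ≤ Ms)
    (hsAC : ∀ x y : ℝ, s y = s x + ∫ σ in x..y, s' σ) (a b : ℝ) (hab : a ≤ b) :
    ∃ g : ℝ → ℝ, Measurable g ∧ (∀ x, |g x| ≤ Ms) ∧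
      ∀ σ ∈ Set.Icc a b, s σ = s a + ∫ v in a..σ, g v := by
  have hMs0 : 0 ≤ Ms := (abs_nonneg _).trans (hMs 0)
  set A : Set ℝ := {c : ℝ | c ∈ Set.Icc a b ∧ IntervalIntegrable s' volume a c} with hA
  have hane : a ∈ A := ⟨⟨le_refl a, hab⟩, by simp [intervalIntegrable_iff]⟩
  have hbdd : BddAbove A := ⟨b, fun c hc => hc.1.2⟩
  set c₀ : ℝ := sSup A with hc₀
  have hac : a ≤ c₀ := le_csSup hbdd hane
  have hcb : c₀ ≤ b := csSup_le ⟨a, hane⟩ fun c hc => hc.1.2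
  have hint : IntervalIntegrable s' volume a c₀ := by
    rcases eq_or_lt_of_le hac with h | h
    · rw [← h]
    · have hIocn : ∀ n : ℕ, IntegrableOn s' (Set.Ioc a (max a (c₀ - 1 / (n + 1)))) volume := by
        intro n
        have hlt : max a (c₀ - 1 / (n + 1)) < c₀ := by
          refine max_lt h ?_
          have : (0:ℝ) < 1 / (n + 1) := by positivity
          linarith
        obtain ⟨c, hcA, hcgt⟩ := exists_lt_of_lt_csSup ⟨a, hane⟩ hlt
        have h1 : IntegrableOn s' (Set.Ioc a c) volume :=
          (intervalIntegrable_iff_integrableOn_Ioc_of_le hcA.1.1).1 hcA.2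
        exact h1.mono_set (Set.Ioc_subset_Ioc_right hcgt.le)
      have hunion : Set.Ioo a c₀ = ⋃ n : ℕ, Set.Ioc a (max a (c₀ - 1 / (n + 1))) := by
        ext x
        simp only [Set.mem_Ioo, Set.mem_iUnion, Set.mem_Ioc]
        constructor
        · rintro ⟨h1, h2⟩
          obtain ⟨n, hn⟩ := exists_nat_one_div_lt (sub_pos.2 h2)
          exact ⟨n, h1, le_max_of_le_right (by linarith)⟩
        · rintro ⟨n, h1, h2⟩
          have : max a (c₀ - 1 / (n + 1)) < c₀ := by
            refine max_lt h ?_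
            have : (0:ℝ) < 1 / (n + 1) := by positivity
            linarith
          exact ⟨h1, lt_of_le_of_lt h2 this⟩
      have hmeas : AEStronglyMeasurable s' (volume.restrict (Set.Ioo a c₀)) := by
        rw [hunion]
        exact aestronglyMeasurable_iUnion_iff.2 fun n => (hIocn n).aestronglyMeasurable
      have hOo : IntegrableOn s' (Set.Ioo a c₀) volume := by
        refine Integrable.mono' (g := fun _ => Ms) ?_ hmeas ?_
        · exact integrableOn_const measure_Ioo_lt_top.ne
        · exact Eventually.of_forall fun z => by simpa [Real.norm_eq_abs] using hMs z
      have hOc : IntegrableOn s' (Set.Ioc a c₀) volume :=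
        hOo.congr_set_ae Ioo_ae_eq_Ioc.symm
      exact (intervalIntegrable_iff_integrableOn_Ioc_of_le hac).2 hOc
  have hnotint : ∀ σ, c₀ < σ → σ ≤ b → s σ = s c₀ := by
    intro σ h1 h2
    have hni : ¬ IntervalIntegrable s' volume c₀ σ := by
      intro hcontra
      have hmem : σ ∈ A := ⟨⟨hac.trans h1.le, h2⟩, hint.trans hcontra⟩
      exact absurd (le_csSup hbdd hmem) (not_le.2 h1)
    rw [hsAC c₀ σ, intervalIntegral.integral_undef hni, add_zero]
  have hsm : AEStronglyMeasurable s' (volume.restrict (Set.Ioc a c₀)) :=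
    ((intervalIntegrable_iff_integrableOn_Ioc_of_le hac).1 hint).aestronglyMeasurable
  set φ : ℝ → ℝ := fun x => max (-Ms) (min Ms (hsm.mk s' x)) with hφ
  have hφm : Measurable φ :=
    measurable_const.max (measurable_const.min hsm.stronglyMeasurable_mk.measurable)
  have hφae : ∀ᵐ x ∂(volume.restrict (Set.Ioc a c₀)), φ x = s' x := by
    filter_upwards [hsm.ae_eq_mk] with x hx
    rw [hφ]
    simp only [← hx]
    rw [min_eq_right (abs_le.1 (hMs x)).2, max_eq_right (abs_le.1 (hMs x)).1]
  refine ⟨(Set.Ioc a c₀).indicator φ, hφm.indicator measurableSet_Ioc, ?_, ?_⟩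
  · intro x
    by_cases hx : x ∈ Set.Ioc a c₀
    · rw [Set.indicator_of_mem hx]
      exact abs_le.2 ⟨le_max_left _ _, max_le (by linarith) (min_le_left _ _)⟩
    · rw [Set.indicator_of_notMem hx, abs_zero]; exact hMs0
  · intro σ hσ
    have hP : ∫ v in a..σ, (Set.Ioc a c₀).indicator φ v = s (min σ c₀) - s a := by
      rw [intervalIntegral.integral_of_le hσ.1, setIntegral_indicator measurableSet_Ioc]
      have h2 : Set.Ioc a σ ∩ Set.Ioc a c₀ = Set.Ioc a (min σ c₀) := by
        rw [Set.Ioc_inter_Ioc, max_self]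
      rw [h2]
      have hsub : Set.Ioc a (min σ c₀) ⊆ Set.Ioc a c₀ :=
        Set.Ioc_subset_Ioc_right (min_le_right _ _)
      have : ∫ v in Set.Ioc a (min σ c₀), φ v = ∫ v in Set.Ioc a (min σ c₀), s' v :=
        integral_congr_ae (ae_restrict_of_ae_restrict_of_subset hsub hφae)
      rw [this, ← intervalIntegral.integral_of_le (le_min hσ.1 hac)]
      rw [hsAC a (min σ c₀)]; ring
    rw [hP]
    rcases le_or_gt σ c₀ with h | h
    · rw [min_eq_left h]; ring
    · rw [min_eq_right h.le, ← hnotint σ h hσ.2]; ring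

end Helpers

open Set in
/-- First-order error estimate: a single integration by parts together with
boundedness of the zero-mean primitive `B1` yields `I_N(t) = O(1/N)` uniformly
in `t ≥ 0`. -/
theorem first_order_error_estimate
    (β B1 : ℝ → ℝ)
    (hβm : Measurable β) (hβb : ∃ M : ℝ, ∀ x : ℝ, |β x| ≤ M)
    (hB1 : ∀ x : ℝ, B1 x = B1 0 + ∫ σ in (0:ℝ)..x, β σ)
    (hB1b : ∃ M : ℝ, ∀ x : ℝ, |B1 x| ≤ M)
    (hB1mean : Tendsto (fun T : ℝ => (1 / T) * ∫ x in (0:ℝ)..T, B1 x) atTop (nhds 0))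
    (k : ℝ) (hk : 0 < k)
    (K : ℝ → ℝ) (hK : ContDiff ℝ 1 K)
    (hKsupp : Function.support K ⊆ Set.Icc 0 k)
    (hK0 : K 0 = 0) (hKk : K k = 0)
    (s s' : ℝ → ℝ)
    (hsb : ∃ M : ℝ, ∀ x : ℝ, |s x| ≤ M ∧ |s' x| ≤ M)
    (hsAC : ∀ x y : ℝ, s y = s x + ∫ σ in x..y, s' σ) :
    ∃ C : ℝ, ∀ N : ℝ, 1 ≤ N → ∀ t : ℝ, 0 ≤ t →
      |∫ σ : ℝ, β (N * σ) * s σ * K (t - σ)| ≤ C / N := by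
  obtain ⟨Mβ, hMβ⟩ := hβb
  obtain ⟨MB, hMB⟩ := hB1b
  obtain ⟨Ms, hMs⟩ := hsb
  have hMs0 : 0 ≤ Ms := (abs_nonneg _).trans (hMs 0).1
  have hMB0 : 0 ≤ MB := (abs_nonneg _).trans (hMB 0)
  have hMβ0 : 0 ≤ Mβ := (abs_nonneg _).trans (hMβ 0)
  have hKdiff : ∀ x, HasDerivAt K (deriv K x) x := fun x =>
    ((hK.differentiable one_ne_zero) x).hasDerivAt
  have hK'cont : Continuous (deriv K) := hK.continuous_deriv le_rfl
  obtain ⟨CK0, hCK0⟩ := (isCompact_Icc (a := (0:ℝ)) (b := k)).exists_bound_of_continuousOn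
    hK'cont.continuousOn
  set CK := max CK0 0 with hCK
  have hCKnn : 0 ≤ CK := le_max_right _ _
  have hCKb : ∀ x ∈ Set.Icc (0:ℝ) k, |deriv K x| ≤ CK := fun x hx =>
    le_trans (by simpa [Real.norm_eq_abs] using hCK0 x hx) (le_max_left _ _)
  obtain ⟨MK0, hMK0⟩ := (isCompact_Icc (a := (0:ℝ)) (b := k)).exists_bound_of_continuousOn
    hK.continuous.continuousOn
  set MK := max MK0 0 with hMK
  have hMKnn : 0 ≤ MK := le_max_right _ _
  have hKb : ∀ x, |K x| ≤ MK := by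
    intro x
    by_cases hx : x ∈ Set.Icc (0:ℝ) k
    · exact le_trans (by simpa [Real.norm_eq_abs] using hMK0 x hx) (le_max_left _ _)
    · have : K x = 0 := by
        by_contra h
        exact hx (hKsupp (Function.mem_support.2 h))
      rw [this, abs_zero]; exact hMKnn
  refine ⟨2 * MB * CK * k * Ms * (1 + k), ?_⟩
  intro N hN t ht
  have hN0 : (0:ℝ) < N := lt_of_lt_of_le one_pos hN
  set a : ℝ := t - k with ha
  set b : ℝ := t with hb
  have hab : a ≤ b := by rw [ha, hb]; linarith
  obtain ⟨g, hgm, hgb, hsg⟩ := exists_good_g s s' Ms (fun x => (hMs x).2) hsAC a b hab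
  set βN : ℝ → ℝ := fun σ => β (N * σ) with hβN
  have hβNm : Measurable βN := hβm.comp (measurable_id.const_mul N)
  have hβNb : ∀ x, |βN x| ≤ Mβ := fun x => hMβ _
  set f : ℝ → ℝ := fun σ => βN σ * K (t - σ) with hf
  have hfm : Measurable f :=
    hβNm.mul (hK.continuous.measurable.comp (measurable_const.sub measurable_id))
  have hfb : ∀ x, |f x| ≤ Mβ * MK := by
    intro x
    rw [hf]
    calc |βN x * K (t - x)| = |βN x| * |K (t - x)| := abs_mul _ _
    _ ≤ Mβ * MK := mul_le_mul (hβNb x) (hKb _) (abs_nonneg _) hMβ0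
  have hfint : ∀ x y : ℝ, IntervalIntegrable f volume x y :=
    bdd_meas_intervalIntegrable hfm hfb
  have hgint : ∀ x y : ℝ, IntervalIntegrable g volume x y :=
    bdd_meas_intervalIntegrable hgm hgb
  have hβint : ∀ x y : ℝ, IntervalIntegrable β volume x y :=
    bdd_meas_intervalIntegrable hβm hMβ
  have hβNint : ∀ x y : ℝ, IntervalIntegrable βN volume x y :=
    bdd_meas_intervalIntegrable hβNm hβNb
  have hKout : ∀ σ : ℝ, σ ∉ Set.Icc a b → K (t - σ) = 0 := by
    intro σ hσ
    by_contra h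
    have h2 := hKsupp (Function.mem_support.2 h)
    rw [Set.mem_Icc] at h2
    rw [Set.mem_Icc, ha, hb] at hσ
    push_neg at hσ
    rcases le_or_gt (t - k) σ with h3 | h3
    · have := hσ h3; linarith [h2.1]
    · linarith [h2.2]
  -- the primitive of g
  set P : ℝ → ℝ := fun σ => ∫ v in a..σ, g v with hP
  have hPcont : Continuous P := intervalIntegral.continuous_primitive hgint a
  -- J and the kernel rewrite
  set J : ℝ → ℝ := fun v => ∫ σ in v..b, f σ with hJ
  have hKrw : ∀ σ : ℝ, K (t - σ) = ∫ w in σ..b, deriv K (t - w) := by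
    intro σ
    have hder : ∀ w ∈ Set.uIcc σ b, HasDerivAt (fun w => -K (t - w)) (deriv K (t - w)) w := by
      intro w _
      have h1 : HasDerivAt (fun w : ℝ => t - w) (-1) w := (hasDerivAt_id w).const_sub t
      have h2 := ((hKdiff (t - w)).comp w h1).neg
      exact h2.congr_deriv (by ring)
    have hci : IntervalIntegrable (fun w => deriv K (t - w)) volume σ b :=
      (hK'cont.comp (continuous_const.sub continuous_id)).intervalIntegrable σ b
    rw [intervalIntegral.integral_eq_sub_of_hasDerivAt hder hci]
    rw [hb, sub_self, hK0]
    ring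
  have hBdiff : ∀ v w : ℝ, ∫ σ in v..w, βN σ = (B1 (N * w) - B1 (N * v)) / N := by
    intro v w
    rw [hβN]
    rw [intervalIntegral.integral_comp_mul_left (fun x => β x) (ne_of_gt hN0)]
    have h1 : ∫ x in N * v..N * w, β x = B1 (N * w) - B1 (N * v) := by
      have h2 := intervalIntegral.integral_interval_sub_left (hβint 0 (N * w)) (hβint 0 (N * v))
      rw [hB1 (N * w), hB1 (N * v)]
      linarith [h2]
    rw [h1, smul_eq_mul]
    ring
  have hJval : ∀ v, a ≤ v → v ≤ b →
      J v = ∫ w in v..b, deriv K (t - w) * ((B1 (N * w) - B1 (N * v)) / N) := by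
    intro v hav hvb
    have hh : IntegrableOn (fun w => deriv K (t - w)) (Set.Ioc v b) :=
      ((hK'cont.comp (continuous_const.sub continuous_id)).integrableOn_Ioc)
    have hβN' : IntegrableOn βN (Set.Ioc v b) :=
      (intervalIntegrable_iff_integrableOn_Ioc_of_le hvb).1 (hβNint v b)
    have htri := tri hvb hh hβN'
    have h1 : J v = ∫ σ in v..b, (∫ w in σ..b, deriv K (t - w)) * βN σ := by
      rw [hJ]
      refine intervalIntegral.integral_congr fun σ _ => ?_
      simp only [hf]
      rw [hKrw σ, mul_comm]
    rw [h1, ← htri]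
    refine intervalIntegral.integral_congr fun w _ => ?_
    rw [hBdiff v w]
  have hJbound : ∀ v ∈ Set.Icc a b, |J v| ≤ 2 * MB * CK * k / N := by
    intro v hv
    rw [hJval v hv.1 hv.2]
    have hbnd : ∀ w ∈ Set.uIoc v b,
        ‖deriv K (t - w) * ((B1 (N * w) - B1 (N * v)) / N)‖ ≤ CK * (2 * MB / N) := by
      intro w hw
      rw [Set.uIoc_of_le hv.2] at hw
      have htw : t - w ∈ Set.Icc (0:ℝ) k := by
        rw [Set.mem_Ioc] at hw
        rw [Set.mem_Icc]
        constructor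
        · rw [hb] at hw; linarith [hw.2]
        · rw [ha] at hv; have := hv.1; linarith [hw.1]
      rw [Real.norm_eq_abs, abs_mul, abs_div, abs_of_pos hN0]
      have h1 : |B1 (N * w) - B1 (N * v)| ≤ 2 * MB := by
        calc |B1 (N * w) - B1 (N * v)| ≤ |B1 (N * w)| + |B1 (N * v)| := abs_sub _ _
        _ ≤ 2 * MB := by linarith [hMB (N * w), hMB (N * v)]
      refine mul_le_mul (hCKb _ htw) ?_ (by positivity) hCKnn
      exact div_le_div_of_nonneg_right h1 hN0.le
    calc |∫ w in v..b, deriv K (t - w) * ((B1 (N * w) - B1 (N * v)) / N)|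
        ≤ CK * (2 * MB / N) * |b - v| :=
          intervalIntegral.norm_integral_le_of_norm_le_const hbnd
    _ ≤ 2 * MB * CK * k / N := by
        have h2 : |b - v| ≤ k := by
          rw [abs_of_nonneg (by linarith [hv.2] : (0:ℝ) ≤ b - v)]
          rw [ha] at hv; linarith [hv.1]
        have h3 : 0 ≤ CK * (2 * MB / N) := by positivity
        calc CK * (2 * MB / N) * |b - v| ≤ CK * (2 * MB / N) * k := by
              exact mul_le_mul_of_nonneg_left h2 h3
        _ = 2 * MB * CK * k / N := by ring
  -- main decomposition
  have hmain : (∫ σ : ℝ, β (N * σ) * s σ * K (t - σ)) = J a * s a + ∫ v in a..b, J v * g v := by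
    have h1 : (fun σ : ℝ => β (N * σ) * s σ * K (t - σ)) = fun σ => f σ * (s a + P σ) := by
      funext σ
      by_cases hσ : σ ∈ Set.Icc a b
      · simp only [hf, hP, hβN]
        rw [← hsg σ hσ]
        ring
      · simp only [hf, hβN]
        rw [hKout σ hσ]
        ring
    rw [h1]
    have h0 : ∀ x ∉ Set.Icc a b, f x * (s a + P x) = 0 := by
      intro x hx
      simp only [hf]
      rw [hKout x hx]
      ring
    rw [← setIntegral_eq_integral_of_forall_compl_eq_zero h0]
    rw [integral_Icc_eq_integral_Ioc, ← intervalIntegral.integral_of_le hab]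
    have h2 : ∫ σ in a..b, f σ * (s a + P σ)
        = (∫ σ in a..b, f σ * s a) + ∫ σ in a..b, f σ * P σ := by
      rw [← intervalIntegral.integral_add ((hfint a b).mul_const (s a))
        ((hfint a b).mul_continuousOn hPcont.continuousOn)]
      refine intervalIntegral.integral_congr fun σ _ => ?_
      ring
    rw [h2, intervalIntegral.integral_mul_const]
    congr 1
    exact tri hab ((intervalIntegrable_iff_integrableOn_Ioc_of_le hab).1 (hfint a b))
      ((intervalIntegrable_iff_integrableOn_Ioc_of_le hab).1 (hgint a b))
  rw [hmain]
  have hJa : |J a| ≤ 2 * MB * CK * k / N := hJbound a ⟨le_refl a, hab⟩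
  have hterm2 : |∫ v in a..b, J v * g v| ≤ 2 * MB * CK * k / N * Ms * k := by
    have hbnd : ∀ v ∈ Set.uIoc a b, ‖J v * g v‖ ≤ 2 * MB * CK * k / N * Ms := by
      intro v hv
      rw [Set.uIoc_of_le hab] at hv
      rw [Real.norm_eq_abs, abs_mul]
      exact mul_le_mul (hJbound v (Set.Ioc_subset_Icc_self hv)) (hgb v) (abs_nonneg _)
        (by positivity)
    calc |∫ v in a..b, J v * g v| ≤ 2 * MB * CK * k / N * Ms * |b - a| :=
          intervalIntegral.norm_integral_le_of_norm_le_const hbnd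
    _ = 2 * MB * CK * k / N * Ms * k := by
        rw [ha, hb]
        congr 1
        rw [abs_of_nonneg (by linarith : (0:ℝ) ≤ t - (t - k))]
        ring
  calc |J a * s a + ∫ v in a..b, J v * g v|
      ≤ |J a * s a| + |∫ v in a..b, J v * g v| := abs_add_le _ _
  _ ≤ 2 * MB * CK * k / N * Ms + 2 * MB * CK * k / N * Ms * k := by
      have : |J a * s a| ≤ 2 * MB * CK * k / N * Ms := by
        rw [abs_mul]
        exact mul_le_mul hJa (hMs a).1 (abs_nonneg _) (by positivity)
      linarith [hterm2]
  _ = 2 * MB * CK * k * Ms * (1 + k) / N := by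
      field_simp
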